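/- If a convex body K in the plane is covered by two planks, then the sum of their widths relative to K is at least 1. -/

import Mathlib

set_option maxHeartbeats 1000000


/-- A plank (strip) of width `w` in direction of the unit vector `u`. -/
def plank (u : EuclideanSpace ℝ (Fin 2)) (a w : ℝ) : Set (EuclideanSpace ℝ (Fin 2)) :=
  {x | a ≤ (inner ℝ x u : ℝ) ∧ (inner ℝ x u : ℝ) ≤ a + w}

/-- The width of a set `K` in direction `u`. -/
noncomputable def dirWidth (K : Set (EuclideanSpace ℝ (Fin 2)))
    (u : EuclideanSpace ℝ (Fin 2)) : ℝ :=
  sSup ((fun x => (inner ℝ x u : ℝ)) '' K) - sInf ((fun x => (inner ℝ x u : ℝ)) '' K)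

/-- Linear functional in direction `u`. -/
noncomputable def fdir (u x : EuclideanSpace ℝ (Fin 2)) : ℝ := inner ℝ x u

private lemma pos_pos {x y : ℝ} (hx : 0 ≤ x) (h : 0 < x * y) : 0 < x ∧ 0 < y := by
  rcases mul_pos_iff.mp h with ⟨h1, h2⟩ | ⟨h1, h2⟩
  · exact ⟨h1, h2⟩
  · linarith

private lemma cs_ineq (r1 r2 u v : ℝ) (hu : 0 < u) (hv : 0 < v) :
    (r1 + r2) ^ 2 / (u + v) ≤ r1 ^ 2 / u + r2 ^ 2 / v := by
  rw [div_add_div _ _ hu.ne' hv.ne', div_le_div_iff₀ (by linarith) (by positivity)]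
  nlinarith [sq_nonneg (r1 * v - r2 * u)]

private lemma sum_clamp (x a b : ℝ) (hab : a ≤ b) :
    max (min x b - a) 0 + max (b - max x a) 0 = b - a := by
  simp only [min_def, max_def]
  split_ifs <;> linarith

/-- The basic 1D covering lemma along an (affinely parameterized) segment. -/
private lemma edge (F0 F1 G0 G1 a b c d : ℝ)
    (hF0 : F0 ≤ a) (hG1 : G1 ≤ c)
    (hcov : ∀ t : ℝ, 0 ≤ t → t ≤ 1 →
      (a ≤ F0 + t * (F1 - F0) ∧ F0 + t * (F1 - F0) ≤ b) ∨
      (c ≤ G0 + t * (G1 - G0) ∧ G0 + t * (G1 - G0) ≤ d)) :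
    (a - F0) * (c - G1) ≤ max (min F1 b - a) 0 * max (min G0 d - c) 0 := by
  have hRHS : 0 ≤ max (min F1 b - a) 0 * max (min G0 d - c) 0 :=
    mul_nonneg (le_max_right _ _) (le_max_right _ _)
  rcases eq_or_lt_of_le hF0 with h0 | h0
  · rw [h0, sub_self, zero_mul]; exact hRHS
  rcases eq_or_lt_of_le hG1 with h1 | h1
  · rw [h1, sub_self, mul_zero]; exact hRHS
  have h2 : c ≤ G0 ∧ G0 ≤ d := by
    rcases hcov 0 le_rfl zero_le_one with ⟨hh, _⟩ | ⟨hh1, hh2⟩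
    · exfalso; linarith
    · constructor <;> linarith
  have h3 : a ≤ F1 ∧ F1 ≤ b := by
    rcases hcov 1 zero_le_one le_rfl with ⟨hh1, hh2⟩ | ⟨hh, _⟩
    · constructor <;> linarith
    · exfalso; linarith
  obtain ⟨hc0, hd0⟩ := h2
  obtain ⟨ha1, hb1⟩ := h3
  rw [min_eq_left hb1, min_eq_left hd0, max_eq_left (by linarith : (0:ℝ) ≤ F1 - a),
    max_eq_left (by linarith : (0:ℝ) ≤ G0 - c)]
  have hFinc : F0 < F1 := lt_of_lt_of_le h0 ha1
  have hGdec : G1 < G0 := lt_of_lt_of_le h1 hc0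
  have hkey : (a - F0) / (F1 - F0) ≤ (G0 - c) / (G0 - G1) := by
    by_contra hlt
    push_neg at hlt
    set s := (G0 - c) / (G0 - G1) with hs
    set t0 := (a - F0) / (F1 - F0) with ht0'
    have hs0 : 0 ≤ s := div_nonneg (by linarith) (by linarith)
    have ht01 : t0 ≤ 1 := by
      rw [ht0', div_le_one (by linarith)]; linarith
    set t := (s + t0) / 2 with ht
    have h4 : s < t := by rw [ht]; linarith
    have h5 : t < t0 := by rw [ht]; linarith
    have hFt : F0 + t * (F1 - F0) < a := by
      have e : t0 * (F1 - F0) = a - F0 := div_mul_cancel₀ _ (by linarith)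
      nlinarith [mul_lt_mul_of_pos_right h5 (show (0:ℝ) < F1 - F0 by linarith)]
    have hGt : G0 + t * (G1 - G0) < c := by
      have e : s * (G0 - G1) = G0 - c := div_mul_cancel₀ _ (by linarith)
      nlinarith [mul_lt_mul_of_pos_right h4 (show (0:ℝ) < G0 - G1 by linarith)]
    rcases hcov t (by linarith) (by linarith) with ⟨hh, _⟩ | ⟨hh, _⟩ <;> linarith
  rw [div_le_div_iff₀ (by linarith) (by linarith)] at hkey
  nlinarith [hkey]

/-- Aggregation of the four corner inequalities. -/
private lemma agg (P1 P2 R1 R2 g1 g2 e1 e2 c1 c2 b1 b2 W1 W2 : ℝ)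
    (hP1 : 0 ≤ P1) (hP2 : 0 ≤ P2) (hR1 : 0 ≤ R1) (hR2 : 0 ≤ R2)
    (hg1 : 0 ≤ g1) (hg2 : 0 ≤ g2) (he1 : 0 ≤ e1) (he2 : 0 ≤ e2)
    (hc1 : 0 ≤ c1) (hc2 : 0 ≤ c2) (hb1 : 0 ≤ b1) (hb2 : 0 ≤ b2)
    (hg : g1 + g2 = W1) (he : e1 + e2 = W1) (ha : c1 + c2 = W2) (hb : b1 + b2 = W2)
    (h1 : P1 * R1 ≤ g1 * c1) (h2 : P2 * R1 ≤ g2 * b1)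
    (h3 : P1 * R2 ≤ e1 * c2) (h4 : P2 * R2 ≤ e2 * b2) :
    (P1 + P2) * (R1 + R2) ≤ W1 * W2 := by
  rcases eq_or_lt_of_le hR1 with hR1' | hR1'
  · subst hR1'
    rw [← he]
    nlinarith [mul_le_mul_of_nonneg_left (show c2 ≤ W2 by linarith) he1,
      mul_le_mul_of_nonneg_left (show b2 ≤ W2 by linarith) he2]
  rcases eq_or_lt_of_le hR2 with hR2' | hR2'
  · subst hR2'
    rw [← hg]
    nlinarith [mul_le_mul_of_nonneg_left (show c1 ≤ W2 by linarith) hg1,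
      mul_le_mul_of_nonneg_left (show b1 ≤ W2 by linarith) hg2]
  rcases eq_or_lt_of_le hP1 with hP1' | hP1'
  · subst hP1'
    rw [← hb]
    nlinarith [mul_le_mul_of_nonneg_right (show g2 ≤ W1 by linarith) hb1,
      mul_le_mul_of_nonneg_right (show e2 ≤ W1 by linarith) hb2]
  rcases eq_or_lt_of_le hP2 with hP2' | hP2'
  · subst hP2'
    rw [← ha]
    nlinarith [mul_le_mul_of_nonneg_right (show g1 ≤ W1 by linarith) hc1,
      mul_le_mul_of_nonneg_right (show e1 ≤ W1 by linarith) hc2]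
  -- all quantities positive
  obtain ⟨hg1', hc1'⟩ := pos_pos hg1 (lt_of_lt_of_le (mul_pos hP1' hR1') h1)
  obtain ⟨hg2', hb1'⟩ := pos_pos hg2 (lt_of_lt_of_le (mul_pos hP2' hR1') h2)
  obtain ⟨he1', hc2'⟩ := pos_pos he1 (lt_of_lt_of_le (mul_pos hP1' hR2') h3)
  obtain ⟨he2', hb2'⟩ := pos_pos he2 (lt_of_lt_of_le (mul_pos hP2' hR2') h4)
  have hW2 : 0 < W2 := by rw [← ha]; linarith
  have k1 : P1 * R1 / c1 ≤ g1 := (div_le_iff₀ hc1').mpr h1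
  have k2 : P2 * R1 / b1 ≤ g2 := (div_le_iff₀ hb1').mpr h2
  have k3 : P1 * R2 / c2 ≤ e1 := (div_le_iff₀ hc2').mpr h3
  have k4 : P2 * R2 / b2 ≤ e2 := (div_le_iff₀ hb2').mpr h4
  have hA : P1 * R1 / c1 + P2 * R1 / b1 ≤ W1 := by linarith
  have hB : P1 * R2 / c2 + P2 * R2 / b2 ≤ W1 := by linarith
  have csa := cs_ineq R1 R2 c1 c2 hc1' hc2'
  have csb := cs_ineq R1 R2 b1 b2 hb1' hb2'
  rw [ha] at csa
  rw [hb] at csb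
  have key : (P1 + P2) * ((R1 + R2) ^ 2 / W2) ≤ W1 * (R1 + R2) := by
    have m1 := mul_le_mul_of_nonneg_left hA hR1
    have m2 := mul_le_mul_of_nonneg_left hB hR2
    have m3 := mul_le_mul_of_nonneg_left csa hP1
    have m4 := mul_le_mul_of_nonneg_left csb hP2
    have e1 : R1 * (P1 * R1 / c1 + P2 * R1 / b1) =
        P1 * (R1 ^ 2 / c1) + P2 * (R1 ^ 2 / b1) := by ring
    have e2 : R2 * (P1 * R2 / c2 + P2 * R2 / b2) =
        P1 * (R2 ^ 2 / c2) + P2 * (R2 ^ 2 / b2) := by ring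
    have e3 : P1 * (R1 ^ 2 / c1 + R2 ^ 2 / c2) =
        P1 * (R1 ^ 2 / c1) + P1 * (R2 ^ 2 / c2) := by ring
    have e4 : P2 * (R1 ^ 2 / b1 + R2 ^ 2 / b2) =
        P2 * (R1 ^ 2 / b1) + P2 * (R2 ^ 2 / b2) := by ring
    have e5 : (P1 + P2) * ((R1 + R2) ^ 2 / W2) =
        P1 * ((R1 + R2) ^ 2 / W2) + P2 * ((R1 + R2) ^ 2 / W2) := by ring
    linarith
  have e0 : (P1 + P2) * ((R1 + R2) ^ 2 / W2) * W2 = (P1 + P2) * (R1 + R2) ^ 2 := by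
    field_simp
  have key2 : (P1 + P2) * (R1 + R2) ^ 2 ≤ W1 * (R1 + R2) * W2 := by
    rw [← e0]
    exact mul_le_mul_of_nonneg_right key hW2.le
  have hX : 0 < R1 + R2 := by linarith
  exact le_of_mul_le_mul_right (by nlinarith [key2]) hX

/-- The two-plank case of Bang's affine plank problem: if a planar convex body
is covered by two planks, the sum of their widths relative to the body is at
least `1`. -/
theorem bang_two_planks_relative (K : Set (EuclideanSpace ℝ (Fin 2)))
    (hK : IsCompact K) (hKc : Convex ℝ K) (hKi : (interior K).Nonempty)
    (u₁ u₂ : EuclideanSpace ℝ (Fin 2)) (a₁ a₂ w₁ w₂ : ℝ)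
    (hu₁ : ‖u₁‖ = 1) (hu₂ : ‖u₂‖ = 1) (hw₁ : 0 ≤ w₁) (hw₂ : 0 ≤ w₂)
    (hcov : K ⊆ plank u₁ a₁ w₁ ∪ plank u₂ a₂ w₂) :
    1 ≤ w₁ / dirWidth K u₁ + w₂ / dirWidth K u₂ := by
  classical
  obtain ⟨z₀, hz₀⟩ := hKi
  have hz₀K : z₀ ∈ K := interior_subset hz₀
  have hKne : K.Nonempty := ⟨z₀, hz₀K⟩
  have hcont₁ : Continuous (fdir u₁) := by
    unfold fdir; exact continuous_id.inner continuous_const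
  have hcont₂ : Continuous (fdir u₂) := by
    unfold fdir; exact continuous_id.inner continuous_const
  have hne₁ : ((fdir u₁) '' K).Nonempty := hKne.image _
  have hne₂ : ((fdir u₂) '' K).Nonempty := hKne.image _
  have hba₁ : BddAbove ((fdir u₁) '' K) := (hK.image hcont₁).bddAbove
  have hbb₁ : BddBelow ((fdir u₁) '' K) := (hK.image hcont₁).bddBelow
  have hba₂ : BddAbove ((fdir u₂) '' K) := (hK.image hcont₂).bddAbove
  have hbb₂ : BddBelow ((fdir u₂) '' K) := (hK.image hcont₂).bddBelow
  set m₁ := sInf ((fdir u₁) '' K) with hm₁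
  set M₁ := sSup ((fdir u₁) '' K) with hM₁
  set m₂ := sInf ((fdir u₂) '' K) with hm₂
  set M₂ := sSup ((fdir u₂) '' K) with hM₂
  have hd₁ : dirWidth K u₁ = M₁ - m₁ := by rw [hM₁, hm₁]; rfl
  have hd₂ : dirWidth K u₂ = M₂ - m₂ := by rw [hM₂, hm₂]; rfl
  have hmem₁ : ∀ x ∈ K, m₁ ≤ fdir u₁ x ∧ fdir u₁ x ≤ M₁ := by
    intro x hx
    rw [hm₁, hM₁]
    exact ⟨csInf_le hbb₁ ⟨x, hx, rfl⟩, le_csSup hba₁ ⟨x, hx, rfl⟩⟩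
  have hmem₂ : ∀ x ∈ K, m₂ ≤ fdir u₂ x ∧ fdir u₂ x ≤ M₂ := by
    intro x hx
    rw [hm₂, hM₂]
    exact ⟨csInf_le hbb₂ ⟨x, hx, rfl⟩, le_csSup hba₂ ⟨x, hx, rfl⟩⟩
  -- positivity of the widths, via an interior ball
  obtain ⟨ε, hε, hball⟩ := Metric.mem_nhds_iff.mp (mem_interior_iff_mem_nhds.mp hz₀)
  have hpt : ∀ u : EuclideanSpace ℝ (Fin 2), ‖u‖ = 1 → z₀ + (ε / 2) • u ∈ K := by
    intro u hu
    apply hball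
    rw [Metric.mem_ball, dist_eq_norm, add_sub_cancel_left, norm_smul, hu, mul_one,
      Real.norm_eq_abs, abs_of_pos (by linarith)]
    linarith
  have hwid : ∀ u : EuclideanSpace ℝ (Fin 2), ‖u‖ = 1 →
      fdir u (z₀ + (ε / 2) • u) = fdir u z₀ + ε / 2 ∧
      fdir u (z₀ + (ε / 2) • (-u)) = fdir u z₀ - ε / 2 := by
    intro u hu
    constructor
    · unfold fdir
      simp only [inner_add_left, real_inner_smul_left]
      rw [real_inner_self_eq_norm_mul_norm, hu]; ring
    · unfold fdir
      simp only [inner_add_left, real_inner_smul_left, inner_neg_left]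
      rw [real_inner_self_eq_norm_mul_norm, hu]
      ring
  have hd₁pos : 0 < M₁ - m₁ := by
    have h1 := (hmem₁ _ (hpt u₁ hu₁)).2
    have h2 := (hmem₁ _ (hpt (-u₁) (by rw [norm_neg]; exact hu₁))).1
    rw [(hwid u₁ hu₁).1] at h1
    rw [show (ε / 2) • (-u₁) = (ε / 2) • (-u₁) from rfl] at h2
    have h2' := (hwid u₁ hu₁).2
    rw [h2'] at h2
    linarith
  have hd₂pos : 0 < M₂ - m₂ := by
    have h1 := (hmem₂ _ (hpt u₂ hu₂)).2
    have h2 := (hmem₂ _ (hpt (-u₂) (by rw [norm_neg]; exact hu₂))).1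
    rw [(hwid u₂ hu₂).1] at h1
    rw [(hwid u₂ hu₂).2] at h2
    linarith
  -- extreme points
  obtain ⟨A, hA, hAmin⟩ := hK.exists_isMinOn hKne hcont₁.continuousOn
  obtain ⟨B, hB, hBmax⟩ := hK.exists_isMaxOn hKne hcont₁.continuousOn
  obtain ⟨C, hC, hCmin⟩ := hK.exists_isMinOn hKne hcont₂.continuousOn
  obtain ⟨D, hD, hDmax⟩ := hK.exists_isMaxOn hKne hcont₂.continuousOn
  have hfA : fdir u₁ A = m₁ := by
    refine le_antisymm ?_ ((hmem₁ A hA).1)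
    rw [hm₁]
    exact le_csInf hne₁ (by rintro y ⟨x, hx, rfl⟩; exact (isMinOn_iff.mp hAmin) x hx)
  have hfB : fdir u₁ B = M₁ := by
    refine le_antisymm ((hmem₁ B hB).2) ?_
    rw [hM₁]
    exact csSup_le hne₁ (by rintro y ⟨x, hx, rfl⟩; exact (isMaxOn_iff.mp hBmax) x hx)
  have hfC : fdir u₂ C = m₂ := by
    refine le_antisymm ?_ ((hmem₂ C hC).1)
    rw [hm₂]
    exact le_csInf hne₂ (by rintro y ⟨x, hx, rfl⟩; exact (isMinOn_iff.mp hCmin) x hx)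
  have hfD : fdir u₂ D = M₂ := by
    refine le_antisymm ((hmem₂ D hD).2) ?_
    rw [hM₂]
    exact csSup_le hne₂ (by rintro y ⟨x, hx, rfl⟩; exact (isMaxOn_iff.mp hDmax) x hx)
  -- clamped planks
  set a := max a₁ m₁ with hadef
  set b := min (a₁ + w₁) M₁ with hbdef
  set c := max a₂ m₂ with hcdef
  set d := min (a₂ + w₂) M₂ with hddef
  have hma : m₁ ≤ a := by rw [hadef]; exact le_max_right _ _
  have hbM : b ≤ M₁ := by rw [hbdef]; exact min_le_right _ _
  have hmc : m₂ ≤ c := by rw [hcdef]; exact le_max_right _ _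
  have hdM : d ≤ M₂ := by rw [hddef]; exact min_le_right _ _
  have haa : a₁ ≤ a := by rw [hadef]; exact le_max_left _ _
  have hbb : b ≤ a₁ + w₁ := by rw [hbdef]; exact min_le_left _ _
  have hcc : a₂ ≤ c := by rw [hcdef]; exact le_max_left _ _
  have hdd : d ≤ a₂ + w₂ := by rw [hddef]; exact min_le_left _ _
  have hcov' : ∀ x ∈ K, (a ≤ fdir u₁ x ∧ fdir u₁ x ≤ b) ∨
      (c ≤ fdir u₂ x ∧ fdir u₂ x ≤ d) := by
    intro x hx
    rcases hcov hx with h | h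
    · left
      obtain ⟨h1, h2⟩ := h
      constructor
      · rw [hadef]; exact max_le h1 (hmem₁ x hx).1
      · rw [hbdef]; exact le_min h2 (hmem₁ x hx).2
    · right
      obtain ⟨h1, h2⟩ := h
      constructor
      · rw [hcdef]; exact max_le h1 (hmem₂ x hx).1
      · rw [hddef]; exact le_min h2 (hmem₂ x hx).2
  -- degenerate cases: one of the clamped planks is empty
  by_cases hab : b < a
  · have hsub : ∀ x ∈ K, a₂ ≤ fdir u₂ x ∧ fdir u₂ x ≤ a₂ + w₂ := by
      intro x hx
      rcases hcov hx with h | h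
      · exfalso
        obtain ⟨h1, h2⟩ := h
        have h1' : a ≤ fdir u₁ x := by rw [hadef]; exact max_le h1 (hmem₁ x hx).1
        have h2' : fdir u₁ x ≤ b := by rw [hbdef]; exact le_min h2 (hmem₁ x hx).2
        linarith
      · exact h
    have h1 := (hsub C hC).1
    have h2 := (hsub D hD).2
    rw [hfC] at h1
    rw [hfD] at h2
    rw [hd₁, hd₂]
    have hg2 : 1 ≤ w₂ / (M₂ - m₂) := by rw [le_div_iff₀ hd₂pos]; linarith
    have hg1 : 0 ≤ w₁ / (M₁ - m₁) := div_nonneg hw₁ hd₁pos.le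
    linarith
  by_cases hcd : d < c
  · have hsub : ∀ x ∈ K, a₁ ≤ fdir u₁ x ∧ fdir u₁ x ≤ a₁ + w₁ := by
      intro x hx
      rcases hcov hx with h | h
      · exact h
      · exfalso
        obtain ⟨h1, h2⟩ := h
        have h1' : c ≤ fdir u₂ x := by rw [hcdef]; exact max_le h1 (hmem₂ x hx).1
        have h2' : fdir u₂ x ≤ d := by rw [hddef]; exact le_min h2 (hmem₂ x hx).2
        linarith
    have h1 := (hsub A hA).1
    have h2 := (hsub B hB).2
    rw [hfA] at h1
    rw [hfB] at h2
    rw [hd₁, hd₂]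
    have hg1 : 1 ≤ w₁ / (M₁ - m₁) := by rw [le_div_iff₀ hd₁pos]; linarith
    have hg2 : 0 ≤ w₂ / (M₂ - m₂) := div_nonneg hw₂ hd₂pos.le
    linarith
  push_neg at hab hcd
  -- the segment covering property
  have hseg : ∀ X Y : EuclideanSpace ℝ (Fin 2), X ∈ K → Y ∈ K → ∀ t : ℝ, 0 ≤ t → t ≤ 1 →
      (a ≤ fdir u₁ X + t * (fdir u₁ Y - fdir u₁ X) ∧
        fdir u₁ X + t * (fdir u₁ Y - fdir u₁ X) ≤ b) ∨
      (c ≤ fdir u₂ X + t * (fdir u₂ Y - fdir u₂ X) ∧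
        fdir u₂ X + t * (fdir u₂ Y - fdir u₂ X) ≤ d) := by
    intro X Y hX hY t ht0 ht1
    have hz : (1 - t) • X + t • Y ∈ K := hKc hX hY (by linarith) ht0 (by ring)
    have e1 : fdir u₁ ((1 - t) • X + t • Y) = fdir u₁ X + t * (fdir u₁ Y - fdir u₁ X) := by
      unfold fdir
      simp only [inner_add_left, real_inner_smul_left]
      ring
    have e2 : fdir u₂ ((1 - t) • X + t • Y) = fdir u₂ X + t * (fdir u₂ Y - fdir u₂ X) := by
      unfold fdir
      simp only [inner_add_left, real_inner_smul_left]
      ring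
    rcases hcov' _ hz with h | h
    · left; rw [e1] at h; exact h
    · right; rw [e2] at h; exact h
  -- the four corner inequalities
  have c1 : (a - m₁) * (c - m₂) ≤
      max (min (fdir u₁ C) b - a) 0 * max (min (fdir u₂ A) d - c) 0 := by
    refine edge m₁ (fdir u₁ C) (fdir u₂ A) m₂ a b c d hma hmc ?_
    intro t ht0 ht1
    have h := hseg A C hA hC t ht0 ht1
    rw [hfA, hfC] at h
    exact h
  have c2 : (M₁ - b) * (c - m₂) ≤
      max (b - max (fdir u₁ C) a) 0 * max (min (fdir u₂ B) d - c) 0 := by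
    have c2' := edge (-M₁) (-(fdir u₁ C)) (fdir u₂ B) m₂ (-b) (-a) c d
      (neg_le_neg hbM) hmc ?_
    · have harg : min (-(fdir u₁ C)) (-a) - -b = b - max (fdir u₁ C) a := by
        rw [min_neg_neg]; ring
      rw [harg] at c2'
      calc (M₁ - b) * (c - m₂) = (-b - -M₁) * (c - m₂) := by ring
        _ ≤ _ := c2'
    intro t ht0 ht1
    have h := hseg B C hB hC t ht0 ht1
    rw [hfB, hfC] at h
    rcases h with ⟨h1, h2⟩ | h
    · left; constructor <;> linarith
    · right; exact h
  have c3 : (a - m₁) * (M₂ - d) ≤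
      max (min (fdir u₁ D) b - a) 0 * max (d - max (fdir u₂ A) c) 0 := by
    have c3' := edge m₁ (fdir u₁ D) (-(fdir u₂ A)) (-M₂) a b (-d) (-c)
      hma (neg_le_neg hdM) ?_
    · have harg : min (-(fdir u₂ A)) (-c) - -d = d - max (fdir u₂ A) c := by
        rw [min_neg_neg]; ring
      rw [harg] at c3'
      calc (a - m₁) * (M₂ - d) = (a - m₁) * (-d - -M₂) := by ring
        _ ≤ _ := c3'
    intro t ht0 ht1
    have h := hseg A D hA hD t ht0 ht1
    rw [hfA, hfD] at h
    rcases h with h | ⟨h1, h2⟩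
    · left; exact h
    · right; constructor <;> linarith
  have c4 : (M₁ - b) * (M₂ - d) ≤
      max (b - max (fdir u₁ D) a) 0 * max (d - max (fdir u₂ B) c) 0 := by
    have c4' := edge (-M₁) (-(fdir u₁ D)) (-(fdir u₂ B)) (-M₂) (-b) (-a) (-d) (-c)
      (neg_le_neg hbM) (neg_le_neg hdM) ?_
    · have harg1 : min (-(fdir u₁ D)) (-a) - -b = b - max (fdir u₁ D) a := by
        rw [min_neg_neg]; ring
      have harg2 : min (-(fdir u₂ B)) (-c) - -d = d - max (fdir u₂ B) c := by
        rw [min_neg_neg]; ring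
      rw [harg1, harg2] at c4'
      calc (M₁ - b) * (M₂ - d) = (-b - -M₁) * (-d - -M₂) := by ring
        _ ≤ _ := c4'
    intro t ht0 ht1
    have h := hseg B D hB hD t ht0 ht1
    rw [hfB, hfD] at h
    rcases h with ⟨h1, h2⟩ | ⟨h1, h2⟩
    · left; constructor <;> linarith
    · right; constructor <;> linarith
  -- aggregate
  have hkey := agg (a - m₁) (M₁ - b) (c - m₂) (M₂ - d)
    (max (min (fdir u₁ C) b - a) 0) (max (b - max (fdir u₁ C) a) 0)
    (max (min (fdir u₁ D) b - a) 0) (max (b - max (fdir u₁ D) a) 0)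
    (max (min (fdir u₂ A) d - c) 0) (max (d - max (fdir u₂ A) c) 0)
    (max (min (fdir u₂ B) d - c) 0) (max (d - max (fdir u₂ B) c) 0)
    (b - a) (d - c)
    (by linarith) (by linarith) (by linarith) (by linarith)
    (le_max_right _ _) (le_max_right _ _) (le_max_right _ _) (le_max_right _ _)
    (le_max_right _ _) (le_max_right _ _) (le_max_right _ _) (le_max_right _ _)
    (sum_clamp (fdir u₁ C) a b hab) (sum_clamp (fdir u₁ D) a b hab)
    (sum_clamp (fdir u₂ A) c d hcd) (sum_clamp (fdir u₂ B) c d hcd)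
    c1 c2 c3 c4
  -- conclude
  have hW1 : b - a ≤ w₁ := by linarith
  have hW2 : d - c ≤ w₂ := by linarith
  rw [hd₁, hd₂, div_add_div _ _ (ne_of_gt hd₁pos) (ne_of_gt hd₂pos),
    le_div_iff₀ (mul_pos hd₁pos hd₂pos)]
  nlinarith [hkey, mul_le_mul_of_nonneg_right hW1 hd₂pos.le,
    mul_le_mul_of_nonneg_right hW2 hd₁pos.le]
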